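/- The matrix equation AX - XB = C over a field has a solution X if and only if the block matrices [[A, C], [0, B]] and [[A, 0], [0, B]] are similar. -/

import Mathlib

open Matrix

theorem roth_similarity {F : Type*} [Field F] {m n : ℕ}
    (A : Matrix (Fin m) (Fin m) F) (B : Matrix (Fin n) (Fin n) F)
    (C : Matrix (Fin m) (Fin n) F) :
    (∃ X : Matrix (Fin m) (Fin n) F, A * X - X * B = C) ↔
    (∃ S : Matrix (Fin m ⊕ Fin n) (Fin m ⊕ Fin n) F, IsUnit S ∧
      S⁻¹ * fromBlocks A C 0 B * S = fromBlocks A 0 0 B) := by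
  constructor
  · rintro ⟨X, h⟩
    have key : (fromBlocks 1 (-X) 0 1 : Matrix (Fin m ⊕ Fin n) (Fin m ⊕ Fin n) F)
        * (fromBlocks 1 X 0 1) = 1 := by
      rw [fromBlocks_multiply, ← fromBlocks_one]
      congr 1 <;> simp
    refine ⟨fromBlocks 1 (-X) 0 1, (Matrix.isUnit_iff_isUnit_det _).mpr (Matrix.isUnit_det_of_right_inverse key), ?_⟩
    have hinv : (fromBlocks (1 : Matrix (Fin m) (Fin m) F) (-X) 0 1)⁻¹ = fromBlocks 1 X 0 1 :=
      inv_eq_right_inv key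
    rw [hinv, fromBlocks_multiply, fromBlocks_multiply]
    congr 1 <;> simp
    rw [← h]; abel
  · rintro ⟨S, hU, hS⟩
    classical
    set T1 : Matrix (Fin m ⊕ Fin n) (Fin m ⊕ Fin n) F := fromBlocks A C 0 B with hT1
    set T0 : Matrix (Fin m ⊕ Fin n) (Fin m ⊕ Fin n) F := fromBlocks A 0 0 B with hT0
    have hdet : IsUnit S.det := (Matrix.isUnit_iff_isUnit_det S).mp hU
    have hSl : S⁻¹ * S = 1 := Matrix.nonsing_inv_mul S hdet
    have hSr : S * S⁻¹ = 1 := Matrix.mul_nonsing_inv S hdet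
    have hT : T1 * S = S * T0 := by
      calc T1 * S = S * (S⁻¹ * T1 * S) := by
            rw [← Matrix.mul_assoc, ← Matrix.mul_assoc, hSr, Matrix.one_mul]
        _ = S * T0 := by rw [hS]
    -- the two solution spaces
    set ℓ0 : Matrix (Fin m ⊕ Fin n) (Fin m ⊕ Fin n) F →ₗ[F] _ :=
      LinearMap.mulLeft F T0 - LinearMap.mulRight F T0 with hl0
    set ℓ1 : Matrix (Fin m ⊕ Fin n) (Fin m ⊕ Fin n) F →ₗ[F] _ :=
      LinearMap.mulLeft F T0 - LinearMap.mulRight F T1 with hl1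
    have memK0 : ∀ Z, Z ∈ LinearMap.ker ℓ0 ↔ T0 * Z = Z * T0 := by
      intro Z
      simp [hl0, LinearMap.mem_ker, LinearMap.sub_apply, LinearMap.mulLeft_apply,
        LinearMap.mulRight_apply, sub_eq_zero]
    have memK1 : ∀ Z, Z ∈ LinearMap.ker ℓ1 ↔ T0 * Z = Z * T1 := by
      intro Z
      simp [hl1, LinearMap.mem_ker, LinearMap.sub_apply, LinearMap.mulLeft_apply,
        LinearMap.mulRight_apply, sub_eq_zero]
    -- equiv between K1 and K0 via right multiplication by S
    let e : (Matrix (Fin m ⊕ Fin n) (Fin m ⊕ Fin n) F) ≃ₗ[F]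
        (Matrix (Fin m ⊕ Fin n) (Fin m ⊕ Fin n) F) :=
      LinearEquiv.ofLinear (LinearMap.mulRight F S) (LinearMap.mulRight F S⁻¹)
        (by ext Z; simp [Matrix.mul_assoc, hSl]) (by ext Z; simp [Matrix.mul_assoc, hSr])
    have he : ∀ Z, e Z = Z * S := fun Z => rfl
    have hes : ∀ Z, e.symm Z = Z * S⁻¹ := fun Z => rfl
    have hmap : (LinearMap.ker ℓ1).map (e : _ →ₗ[F] _) = LinearMap.ker ℓ0 := by
      apply le_antisymm
      · rintro _ ⟨Z, hZ, rfl⟩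
        rw [SetLike.mem_coe, memK1] at hZ
        rw [LinearEquiv.coe_coe, memK0, he, ← Matrix.mul_assoc, hZ, Matrix.mul_assoc, hT,
          Matrix.mul_assoc]
      · intro W hW
        rw [memK0] at hW
        have hT1' : T1 = S * T0 * S⁻¹ := by
          rw [← hT, Matrix.mul_assoc, hSr, Matrix.mul_one]
        refine ⟨W * S⁻¹, ?_, ?_⟩
        · rw [SetLike.mem_coe, memK1, hT1']
          simp only [← Matrix.mul_assoc, hW]
          rw [Matrix.mul_assoc W S⁻¹ S, hSl, Matrix.mul_one]
        · rw [LinearEquiv.coe_coe, he, Matrix.mul_assoc, hSl, Matrix.mul_one]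
    have hrank : Module.finrank F (LinearMap.ker ℓ1) = Module.finrank F (LinearMap.ker ℓ0) := by
      rw [← hmap, LinearEquiv.finrank_map_eq]
    -- the projection onto the (1,1) and (2,1) blocks
    let ρ : Matrix (Fin m ⊕ Fin n) (Fin m ⊕ Fin n) F →ₗ[F]
        (Matrix (Fin m) (Fin m) F × Matrix (Fin n) (Fin m) F) :=
      { toFun := fun Z => (Z.toBlocks₁₁, Z.toBlocks₂₁)
        map_add' := fun Z W => rfl
        map_smul' := fun c Z => rfl }
    have hρ : ∀ Z, ρ Z = (Z.toBlocks₁₁, Z.toBlocks₂₁) := fun Z => rfl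
    -- rank-nullity for the restriction of ρ to a submodule
    have rn : ∀ p : Submodule F (Matrix (Fin m ⊕ Fin n) (Fin m ⊕ Fin n) F),
        Module.finrank F (p.map ρ) + Module.finrank F (p ⊓ LinearMap.ker ρ : Submodule F _)
          = Module.finrank F p := by
      intro p
      have h1 := LinearMap.finrank_range_add_finrank_ker (ρ.domRestrict p)
      rw [LinearMap.range_domRestrict, LinearMap.ker_domRestrict] at h1
      rw [← h1]
      congr 1
      rw [← Submodule.finrank_map_subtype_eq p ((LinearMap.ker ρ).comap p.subtype),
        Submodule.map_comap_subtype]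
    -- the kernels of ρ on K1 and K0 agree
    have hker : LinearMap.ker ℓ1 ⊓ LinearMap.ker ρ = LinearMap.ker ℓ0 ⊓ LinearMap.ker ρ := by
      have key : ∀ Z : Matrix (Fin m ⊕ Fin n) (Fin m ⊕ Fin n) F, Z ∈ LinearMap.ker ρ →
          Z * T1 = Z * T0 := by
        intro Z hZ
        rw [LinearMap.mem_ker, hρ, Prod.mk_eq_zero] at hZ
        rw [← fromBlocks_toBlocks Z, hZ.1, hZ.2, hT1, hT0, fromBlocks_multiply,
          fromBlocks_multiply]
        simp
      ext Z
      simp only [Submodule.mem_inf]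
      constructor <;> rintro ⟨h1, h2⟩ <;> refine ⟨?_, h2⟩
      · rw [memK0]; rw [memK1] at h1; rw [h1, key Z h2]
      · rw [memK1]; rw [memK0] at h1; rw [key Z h2, h1]
    -- comparison of images
    have himage : (LinearMap.ker ℓ1).map ρ = (LinearMap.ker ℓ0).map ρ := by
      have hle : (LinearMap.ker ℓ1).map ρ ≤ (LinearMap.ker ℓ0).map ρ := by
        rintro _ ⟨Z, hZ, rfl⟩
        rw [SetLike.mem_coe, memK1] at hZ
        -- extract the block equations
        have h11 : A * Z.toBlocks₁₁ = Z.toBlocks₁₁ * A := by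
          have := congrArg Matrix.toBlocks₁₁ hZ
          rw [← fromBlocks_toBlocks Z, hT1, hT0, fromBlocks_multiply, fromBlocks_multiply] at this
          simpa using this
        have h21 : B * Z.toBlocks₂₁ = Z.toBlocks₂₁ * A := by
          have := congrArg Matrix.toBlocks₂₁ hZ
          rw [← fromBlocks_toBlocks Z, hT1, hT0, fromBlocks_multiply, fromBlocks_multiply] at this
          simpa using this
        refine ⟨fromBlocks Z.toBlocks₁₁ 0 Z.toBlocks₂₁ 0, ?_, ?_⟩
        · rw [SetLike.mem_coe, memK0, hT0, fromBlocks_multiply, fromBlocks_multiply]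
          simp [h11, h21]
        · rw [hρ, hρ]
          simp [toBlocks_fromBlocks₁₁, toBlocks_fromBlocks₂₁]
      apply Submodule.eq_of_le_of_finrank_le hle
      have e1 := rn (LinearMap.ker ℓ1)
      have e0 := rn (LinearMap.ker ℓ0)
      rw [hker] at e1
      omega
    -- (1, 0) lies in the image of K0, hence of K1
    have hmem : ((1 : Matrix (Fin m) (Fin m) F), (0 : Matrix (Fin n) (Fin m) F))
        ∈ (LinearMap.ker ℓ0).map ρ := by
      refine ⟨fromBlocks 1 0 0 0, ?_, ?_⟩
      · rw [SetLike.mem_coe, memK0, hT0, fromBlocks_multiply, fromBlocks_multiply]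
        simp
      · rw [hρ]
        simp [toBlocks_fromBlocks₁₁, toBlocks_fromBlocks₂₁]
    rw [← himage] at hmem
    obtain ⟨Z, hZ, hZρ⟩ := hmem
    rw [SetLike.mem_coe, memK1] at hZ
    rw [hρ, Prod.mk.injEq] at hZρ
    have h12 : A * Z.toBlocks₁₂ = Z.toBlocks₁₁ * C + Z.toBlocks₁₂ * B := by
      have := congrArg Matrix.toBlocks₁₂ hZ
      rw [← fromBlocks_toBlocks Z, hT1, hT0, fromBlocks_multiply, fromBlocks_multiply] at this
      simpa using this
    refine ⟨Z.toBlocks₁₂, ?_⟩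
    rw [sub_eq_iff_eq_add, h12, hZρ.1, Matrix.one_mul, add_comm]
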